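/- Let L = G ∩ H be a lune on S^2 with thickness greater than π/2, where G and H are hemispheres. Let p be the center of the semicircle G/H and s the center of the semicircle H/G. Then for every point x on the semicircle H/G with x ≠ s, one has |px| < |ps|; consequently, |pz| ≤ |ps| = Δ(L) for every z ∈ L. -/

import Mathlib

noncomputable section

/-- Euclidean space ℝⁿ. -/
abbrev Esp (n : ℕ) := EuclideanSpace ℝ (Fin n)

/-- The unit sphere in ℝⁿ. -/
def uSphere (n : ℕ) : Set (Esp n) := {x | ‖x‖ = 1}

/-- Geodesic (angular) distance between unit vectors. -/
def sdist {n : ℕ} (a b : Esp n) : ℝ := Real.arccos (inner ℝ a b : ℝ)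

/-- Closed hemisphere with center `m`. -/
def Hemi {n : ℕ} (m : Esp n) : Set (Esp n) := {x ∈ uSphere n | 0 ≤ (inner ℝ m x : ℝ)}

/-- The great sphere (great circle for n = 3) bounding the hemisphere centered at `m`. -/
def gSphere {n : ℕ} (m : Esp n) : Set (Esp n) := {x ∈ uSphere n | (inner ℝ m x : ℝ) = 0}

/-- The shorter great-circle arc between `a` and `b`: points through which a
minimizing geodesic from `a` to `b` passes. -/
def Arc {n : ℕ} (a b : Esp n) : Set (Esp n) :=
  {x ∈ uSphere n | sdist a x + sdist x b = sdist a b}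

/-- Spherically convex set: contained in the sphere, no antipodal pairs, and
closed under taking shorter arcs. -/
def SphConvex {n : ℕ} (C : Set (Esp n)) : Prop :=
  C ⊆ uSphere n ∧ (∀ x ∈ C, -x ∉ C) ∧ ∀ a ∈ C, ∀ b ∈ C, Arc a b ⊆ C

/-- Interior of a subset of the sphere relative to the sphere. -/
def sphInterior {n : ℕ} (C : Set (Esp n)) : Set (Esp n) :=
  {x ∈ uSphere n | ∃ ε > 0, ∀ y ∈ uSphere n, dist y x < ε → y ∈ C}

/-- Spherical convex body: closed, spherically convex, with nonempty interior
relative to the sphere. -/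
def SphBody {n : ℕ} (C : Set (Esp n)) : Prop :=
  SphConvex C ∧ IsClosed C ∧ (sphInterior C).Nonempty

/-- Boundary of a closed subset of the sphere relative to the sphere. -/
def sphBoundary {n : ℕ} (C : Set (Esp n)) : Set (Esp n) := C \ sphInterior C

/-- `g`, `h` are centers of two distinct non-opposite hemispheres. -/
def IsLune {n : ℕ} (g h : Esp n) : Prop :=
  g ∈ uSphere n ∧ h ∈ uSphere n ∧ g ≠ h ∧ g ≠ -h

/-- The lune determined by hemisphere centers `g` and `h`. -/
def Lune {n : ℕ} (g h : Esp n) : Set (Esp n) := Hemi g ∩ Hemi h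

/-- The (d-1)-dimensional hemisphere `G/H` bounding the lune `G ∩ H`:
part of the great sphere of `G` lying in `H`.  (A semicircle when n = 3.) -/
def semic {n : ℕ} (g h : Esp n) : Set (Esp n) :=
  {x ∈ uSphere n | (inner ℝ g x : ℝ) = 0 ∧ 0 ≤ (inner ℝ h x : ℝ)}

/-- The center of the bounding hemisphere `G/H` of the lune `G ∩ H`:
the normalized projection of `h` onto the hyperplane orthogonal to `g`. -/
def scCenter {n : ℕ} (g h : Esp n) : Esp n :=
  ‖h - (inner ℝ g h : ℝ) • g‖⁻¹ • (h - (inner ℝ g h : ℝ) • g)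

/-- Thickness of a lune: distance between the centers of its two bounding
hemispheres. -/
def lthick {n : ℕ} (g h : Esp n) : ℝ := sdist (scCenter g h) (scCenter h g)

/-- Thickness of a convex body: minimal thickness of a lune containing it. -/
def thick {n : ℕ} (C : Set (Esp n)) : ℝ :=
  sInf {t | ∃ g h, IsLune g h ∧ C ⊆ Lune g h ∧ lthick g h = t}

/-- Reduced spherical body. -/
def Reduced {n : ℕ} (R : Set (Esp n)) : Prop :=
  SphBody R ∧ ∀ Z, SphBody Z → Z ⊆ R → Z ≠ R → thick Z < thick R

/-- Geodesic diameter of a set on the sphere. -/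
def sdiam {n : ℕ} (C : Set (Esp n)) : ℝ :=
  sSup {t | ∃ a ∈ C, ∃ b ∈ C, sdist a b = t}

/-- The hemisphere centered at `m` supports `C` at `p`. -/
def SupportsAt {n : ℕ} (C : Set (Esp n)) (m p : Esp n) : Prop :=
  m ∈ uSphere n ∧ C ⊆ Hemi m ∧ p ∈ C ∧ (inner ℝ m p : ℝ) = 0

/-- The hemisphere centered at `m` supports `C`. -/
def Supports {n : ℕ} (C : Set (Esp n)) (m : Esp n) : Prop := ∃ p, SupportsAt C m p

/-- The width of `C` determined by the supporting hemisphere centered at `m`: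
minimal thickness of a lune `M ∩ M*` over supporting hemispheres `M*` of `C`. -/
def sWidth {n : ℕ} (C : Set (Esp n)) (m : Esp n) : ℝ :=
  sInf {t | ∃ h, Supports C h ∧ IsLune m h ∧ C ⊆ Lune m h ∧ lthick m h = t}

/-- `C` is of constant width `w`. -/
def ConstWidth {n : ℕ} (C : Set (Esp n)) (w : ℝ) : Prop :=
  ∀ m, Supports C m → sWidth C m = w

/-- Extreme point of a spherically convex set. -/
def ExtremeP {n : ℕ} (C : Set (Esp n)) (e : Esp n) : Prop :=
  e ∈ C ∧ ∀ a ∈ C, ∀ b ∈ C, e ∈ Arc a b → e = a ∨ e = b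

/-- `p` is a smooth boundary point: exactly one hemisphere supports `C` at `p`. -/
def SmoothPoint {n : ℕ} (C : Set (Esp n)) (p : Esp n) : Prop :=
  ∃! m, SupportsAt C m p

/-- Strict convexity: the boundary contains no nondegenerate great-circle arc. -/
def StrictlyConvexS {n : ℕ} (C : Set (Esp n)) : Prop :=
  ∀ a ∈ sphBoundary C, ∀ b ∈ sphBoundary C, Arc a b ⊆ sphBoundary C → a = b

end

set_option maxHeartbeats 1000000 in
/-- For a lune L = G ∩ H of thickness greater than π/2, with p the center of
G/H and s the center of H/G: |px| < |ps| for every x ≠ s on the semicircle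
H/G, and consequently |pz| ≤ |ps| = Δ(L) for every z ∈ L. -/
theorem stmt_7 (g h : Esp 3) (hl : IsLune g h) (ht : Real.pi / 2 < lthick g h) :
    (∀ x ∈ semic h g, x ≠ scCenter h g →
        sdist (scCenter g h) x < sdist (scCenter g h) (scCenter h g)) ∧
    (∀ z ∈ Lune g h, sdist (scCenter g h) z ≤ sdist (scCenter g h) (scCenter h g)) ∧
    sdist (scCenter g h) (scCenter h g) = lthick g h := by
  obtain ⟨hg, hh, hgh, hgnh⟩ := hl
  have hg1 : ‖g‖ = 1 := hg
  have hh1 : ‖h‖ = 1 := hh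
  set t : ℝ := (inner ℝ g h : ℝ) with htdef
  have hth : (inner ℝ h g : ℝ) = t := real_inner_comm g h
  have ht1 : t < 1 := (inner_lt_one_iff_real_of_norm_eq_one hg1 hh1).2 hgh
  have htm1 : -1 < t := by
    have hnh : ‖(-h : Esp 3)‖ = 1 := by rw [norm_neg]; exact hh1
    have := (inner_lt_one_iff_real_of_norm_eq_one hg1 hnh).2 hgnh
    rw [inner_neg_right] at this
    linarith
  set r : ℝ := Real.sqrt (1 - t ^ 2) with hrdef
  have hr2 : r ^ 2 = 1 - t ^ 2 := Real.sq_sqrt (by nlinarith)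
  have hr : 0 < r := Real.sqrt_pos.2 (by nlinarith)
  have hgg : (inner ℝ g g : ℝ) = 1 := by rw [real_inner_self_eq_norm_sq, hg1]; norm_num
  have hhh : (inner ℝ h h : ℝ) = 1 := by rw [real_inner_self_eq_norm_sq, hh1]; norm_num
  have hn1 : ‖h - t • g‖ = r := by
    have : ‖h - t • g‖ ^ 2 = 1 - t ^ 2 := by
      rw [← real_inner_self_eq_norm_sq]
      simp only [inner_sub_left, inner_sub_right, real_inner_smul_left, real_inner_smul_right,
        hgg, hhh, hth, ← htdef]
      ring
    rw [hrdef, ← this, Real.sqrt_sq (norm_nonneg _)]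
  have hn2 : ‖g - t • h‖ = r := by
    have : ‖g - t • h‖ ^ 2 = 1 - t ^ 2 := by
      rw [← real_inner_self_eq_norm_sq]
      simp only [inner_sub_left, inner_sub_right, real_inner_smul_left, real_inner_smul_right,
        hgg, hhh, hth, ← htdef]
      ring
    rw [hrdef, ← this, Real.sqrt_sq (norm_nonneg _)]
  have hp : scCenter g h = r⁻¹ • (h - t • g) := by
    rw [scCenter, ← htdef, hn1]
  have hs : scCenter h g = r⁻¹ • (g - t • h) := by
    rw [scCenter, hth, hn2]
  set p := scCenter g h
  set s := scCenter h g
  have hp1 : ‖p‖ = 1 := by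
    rw [hp, norm_smul, hn1, norm_inv, Real.norm_eq_abs, abs_of_pos hr, inv_mul_cancel₀ hr.ne']
  have hs1 : ‖s‖ = 1 := by
    rw [hs, norm_smul, hn2, norm_inv, Real.norm_eq_abs, abs_of_pos hr, inv_mul_cancel₀ hr.ne']
  have hrne : r ≠ 0 := hr.ne'
  have hin : (inner ℝ (h - t • g) (g - t • h) : ℝ) = -t * r ^ 2 := by
    simp only [inner_sub_left, inner_sub_right, real_inner_smul_left, real_inner_smul_right,
      hgg, hhh, hth, ← htdef]
    rw [hr2]; ring
  have hps : (inner ℝ p s : ℝ) = -t := by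
    rw [hp, hs, real_inner_smul_left, real_inner_smul_right, hin]
    field_simp
  have hlth : lthick g h = Real.arccos (-t) := by
    rw [lthick]; show sdist p s = _; rw [sdist, hps]
  -- t > 0
  have ht0 : 0 < t := by
    by_contra hc
    push_neg at hc
    have h1 : Real.arcsin 0 ≤ Real.arcsin (-t) := Real.monotone_arcsin (by linarith)
    rw [Real.arcsin_zero] at h1
    rw [hlth, Real.arccos] at ht
    linarith
  -- inner ℝ products are in [-1,1]
  have hbd : ∀ x y : Esp 3, ‖x‖ = 1 → ‖y‖ = 1 → -1 ≤ (inner ℝ x y : ℝ) ∧ (inner ℝ x y : ℝ) ≤ 1 := by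
    intro x y hx hy
    have h1 := abs_real_inner_le_norm x y
    rw [hx, hy] at h1
    constructor <;> [linarith [neg_abs_le (inner ℝ x y : ℝ)]; linarith [le_abs_self (inner ℝ x y : ℝ)]]
  refine ⟨?_, ?_, rfl⟩
  · intro x hx hxs
    obtain ⟨hxu, hhx, hgx⟩ := hx
    have hx1 : ‖x‖ = 1 := hxu
    have hsx : (inner ℝ s x : ℝ) < 1 :=
      (inner_lt_one_iff_real_of_norm_eq_one hs1 hx1).2 (fun e => hxs e.symm)
    have hpx : (inner ℝ p x : ℝ) = -t * (inner ℝ s x : ℝ) := by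
      rw [hp, hs, real_inner_smul_left, real_inner_smul_left]
      simp only [inner_sub_left, real_inner_smul_left, hhx]
      ring
    have hkey : -t < (inner ℝ p x : ℝ) := by
      rw [hpx]
      nlinarith [mul_pos ht0 (sub_pos.2 hsx)]
    have hm1 : (inner ℝ p x : ℝ) ∈ Set.Icc (-1 : ℝ) 1 := by
      have := hbd p x hp1 hx1; exact ⟨this.1, this.2⟩
    have hm2 : (-t : ℝ) ∈ Set.Icc (-1 : ℝ) 1 := ⟨by linarith, by linarith⟩
    calc sdist p x = Real.arccos (inner ℝ p x : ℝ) := rfl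
      _ < Real.arccos (-t) := Real.strictAntiOn_arccos hm2 hm1 hkey
      _ = sdist p s := by rw [sdist, hps]
  · intro z hz
    obtain ⟨⟨hzu, hgz⟩, _, hhz⟩ := hz
    have hz1 : ‖z‖ = 1 := hzu
    set a : ℝ := (inner ℝ g z : ℝ) with hadef
    set b : ℝ := (inner ℝ p z : ℝ) with hbdef
    have hgp : (inner ℝ g p : ℝ) = 0 := by
      rw [hp]
      simp only [inner_smul_right, inner_sub_right, real_inner_smul_right, hgg, ← htdef]
      ring
    have hrp : r • p = h - t • g := by
      rw [hp, smul_smul, mul_inv_cancel₀ hr.ne', one_smul]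
    have hhzval : (inner ℝ h z : ℝ) = t * a + r * b := by
      have : (inner ℝ (h - t • g) z : ℝ) = (inner ℝ (r • p) z : ℝ) := by rw [hrp]
      simp only [inner_sub_left, real_inner_smul_left] at this
      rw [hadef, hbdef]; linarith
    -- Bessel: a^2 + b^2 ≤ 1
    have hbessel : a ^ 2 + b ^ 2 ≤ 1 := by
      have h0 : (0 : ℝ) ≤ (inner ℝ (z - a • g - b • p) (z - a • g - b • p) : ℝ) :=
        real_inner_self_nonneg
      have hzz : (inner ℝ z z : ℝ) = 1 := by rw [real_inner_self_eq_norm_sq, hz1]; norm_num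
      have hpp : (inner ℝ p p : ℝ) = 1 := by rw [real_inner_self_eq_norm_sq, hp1]; norm_num
      have hpg : (inner ℝ p g : ℝ) = 0 := (real_inner_comm g p).trans hgp
      have hzg : (inner ℝ z g : ℝ) = a := (real_inner_comm z g).symm
      have hzp : (inner ℝ z p : ℝ) = b := (real_inner_comm z p).symm
      simp only [inner_sub_left, inner_sub_right, real_inner_smul_left, real_inner_smul_right,
        hzz, hpp, hgg, hgp, hpg, hzg, hzp, ← hadef, ← hbdef] at h0
      nlinarith
    have hhz' : 0 ≤ t * a + r * b := by rw [← hhzval]; exact hhz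
    have hkey : -t ≤ b := by
      rcases le_or_gt a r with hcase | hcase
      · nlinarith
      · nlinarith
    have : Real.arccos b ≤ Real.arccos (-t) := by
      rw [Real.arccos, Real.arccos]
      have := Real.monotone_arcsin hkey
      linarith
    calc sdist p z = Real.arccos b := rfl
      _ ≤ Real.arccos (-t) := this
      _ = sdist p s := by rw [sdist, hps]
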